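/- Let X₁, X₂, ... be a sequence of Bernoulli random variables adapted to a filtration (F_i) with Pr(X_i = 1 | F_{i−1}) = P_i, where P_i is F_{i−1}-measurable. Then for any W > 0: Pr(∃ n: ∑_{i=1}^n X_i < (1/2)∑_{i=1}^n P_i − W) ≤ e^{−W}. -/

import Mathlib

open MeasureTheory Filter

lemma nonneg_supermartingale_anytime {Ω : Type*} {m : MeasurableSpace Ω} {μ : Measure Ω}
    [IsFiniteMeasure μ] {F : Filtration ℕ m} {M : ℕ → Ω → ℝ}
    (hM : Supermartingale M F μ) (hpos : ∀ n ω, 0 ≤ M n ω) {ε : ℝ} (hε : 0 < ε) :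
    ENNReal.ofReal ε * μ {ω | ∃ n, ε ≤ M n ω} ≤ ENNReal.ofReal (∫ ω, M 0 ω ∂μ) := by
  set A : ℕ → Set Ω := fun n => {ω | ∃ k ≤ n, ε ≤ M k ω} with hA_def
  have hA : ∀ n, MeasurableSet (A n) := by
    intro n
    have : A n = ⋃ k ∈ Set.Iic n, {ω | ε ≤ M k ω} := by ext ω; simp [hA_def]
    rw [this]
    exact MeasurableSet.biUnion (Set.to_countable _) fun k _ =>
      measurableSet_le measurable_const ((hM.stronglyMeasurable k).measurable.le (F.le k))
  have step : ∀ n, ENNReal.ofReal ε * μ (A n) ≤ ENNReal.ofReal (∫ ω, M 0 ω ∂μ) := by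
    intro n
    set τ : Ω → WithTop ℕ := fun ω => ((hittingBtwn M (Set.Ici ε) 0 n ω : ℕ) : WithTop ℕ) with hτ_def
    have hτ : IsStoppingTime F τ := hM.stronglyAdapted.adapted.isStoppingTime_hittingBtwn measurableSet_Ici
    have hτ_le : ∀ ω, τ ω ≤ n := fun ω => WithTop.coe_le_coe.2 (hittingBtwn_le ω)
    have hneg : stoppedValue (-M) τ = -(stoppedValue M τ) := rfl
    have hint_sv : Integrable (stoppedValue M τ) μ := by
      have h := (hM.neg.integrable_stoppedValue hτ hτ_le).neg
      rw [hneg, neg_neg] at h; exact h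
    have hsv_le : ∫ ω, stoppedValue M τ ω ∂μ ≤ ∫ ω, M 0 ω ∂μ := by
      have h := hM.neg.expected_stoppedValue_mono (isStoppingTime_const F 0) hτ
        (fun ω => WithTop.coe_le_coe.2 (Nat.zero_le _)) hτ_le
      have h0 : (stoppedValue (-M) fun _ => WithTop.some (0 : ℕ)) = -(M 0) := rfl
      rw [h0, hneg] at h
      simp only [Pi.neg_apply, integral_neg, neg_le_neg_iff] at h
      exact h
    have hge : ∀ ω ∈ A n, ε ≤ stoppedValue M τ ω := by
      rintro ω ⟨k, hk, hke⟩
      exact stoppedValue_hittingBtwn_mem ⟨k, ⟨Nat.zero_le _, hk⟩, hke⟩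
    have h1 : ε * (μ (A n)).toReal ≤ ∫ ω in A n, stoppedValue M τ ω ∂μ :=
      setIntegral_ge_of_const_le_real (hA n) (measure_ne_top μ _) hge hint_sv.integrableOn
    have h2 : ∫ ω in A n, stoppedValue M τ ω ∂μ ≤ ∫ ω, stoppedValue M τ ω ∂μ :=
      setIntegral_le_integral hint_sv (Filter.Eventually.of_forall fun ω => hpos _ ω)
    calc ENNReal.ofReal ε * μ (A n)
        = ENNReal.ofReal (ε * (μ (A n)).toReal) := by
          rw [ENNReal.ofReal_mul hε.le, ENNReal.ofReal_toReal (measure_ne_top μ _)]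
      _ ≤ ENNReal.ofReal (∫ ω, M 0 ω ∂μ) :=
          ENNReal.ofReal_le_ofReal ((h1.trans h2).trans hsv_le)
  have hU : {ω | ∃ n, ε ≤ M n ω} = ⋃ n, A n := by
    ext ω
    simp only [Set.mem_setOf_eq, Set.mem_iUnion, hA_def]
    exact ⟨fun ⟨n, h⟩ => ⟨n, n, le_rfl, h⟩, fun ⟨n, k, _, h⟩ => ⟨k, h⟩⟩
  have hmono : Monotone A := fun a b hab ω ⟨k, hk, h⟩ => ⟨k, hk.trans hab, h⟩
  rw [hU, hmono.directed_le.measure_iUnion, ENNReal.mul_iSup]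
  exact iSup_le step

/-- Anytime lower-tail concentration for adapted Bernoulli sums (Lemma 7.4 of
Dann et al. 2017): if `X_{i+1}` is `F_{i+1}`-measurable, `{0,1}`-valued, and
`E[X_{i+1} | F_i] = P_{i+1}` a.e. with `P_{i+1}` being `F_i`-measurable, then for any
`W > 0`, `Pr(∃ n, ∑_{i=1}^n X_i < (1/2) ∑_{i=1}^n P_i − W) ≤ e^{−W}`. -/
theorem anytime_bernoulli_lower_tail
    (Ω : Type*) {m : MeasurableSpace Ω} (μ : Measure Ω) [IsProbabilityMeasure μ]
    (F : Filtration ℕ m) (X Pi : ℕ → Ω → ℝ)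
    (hadapted : ∀ i, StronglyMeasurable[F (i + 1)] (X (i + 1)))
    (hbern : ∀ i ω, X (i + 1) ω = 0 ∨ X (i + 1) ω = 1)
    (hPmeas : ∀ i, StronglyMeasurable[F i] (Pi (i + 1)))
    (hcond : ∀ i, μ[X (i + 1)|F i] =ᵐ[μ] Pi (i + 1))
    (W : ℝ) (hW : 0 < W) :
    μ {ω | ∃ n : ℕ, (∑ i ∈ Finset.range n, X (i + 1) ω) <
        (1 / 2) * (∑ i ∈ Finset.range n, Pi (i + 1) ω) - W} ≤
      ENNReal.ofReal (Real.exp (-W)) := by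
  classical
  set c : ℝ := 1 - Real.exp (-1) with hc
  set M : ℕ → Ω → ℝ := fun n ω =>
    Real.exp (∑ i ∈ Finset.range n, ((1/2) * Pi (i+1) ω - X (i+1) ω)) with hM_def
  have hX01 : ∀ i ω, 0 ≤ X (i+1) ω ∧ X (i+1) ω ≤ 1 := by
    intro i ω; rcases hbern i ω with h | h <;> rw [h] <;> norm_num
  have hXint : ∀ i, Integrable (X (i+1)) μ := by
    intro i
    refine Integrable.mono' (integrable_const (1:ℝ))
      ((hadapted i).mono (F.le _)).aestronglyMeasurable
      (Eventually.of_forall fun ω => ?_)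
    rw [Real.norm_eq_abs, abs_of_nonneg (hX01 i ω).1]; exact (hX01 i ω).2
  have hP01 : ∀ᵐ ω ∂μ, ∀ i, 0 ≤ Pi (i+1) ω ∧ Pi (i+1) ω ≤ 1 := by
    rw [ae_all_iff]
    intro i
    have h0 : (0:Ω → ℝ) ≤ᵐ[μ] μ[X (i+1)|F i] :=
      condExp_nonneg (Eventually.of_forall fun ω => (hX01 i ω).1)
    have hub : μ[X (i+1)|F i] ≤ᵐ[μ] fun _ => (1:ℝ) := by
      have h := condExp_mono (m := F i) (hXint i) (integrable_const (1:ℝ))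
        (Eventually.of_forall fun ω => (hX01 i ω).2)
      rwa [condExp_const (F.le i)] at h
    filter_upwards [h0, hub, hcond i] with ω h1 h2 h3
    rw [← h3]; exact ⟨h1, h2⟩
  have hMadp : StronglyAdapted F M := by
    intro n
    refine Real.continuous_exp.comp_stronglyMeasurable ?_
    refine Finset.stronglyMeasurable_fun_sum _ fun i hi => ?_
    rw [Finset.mem_range] at hi
    exact (((hPmeas i).mono (F.mono hi.le)).const_mul _).sub
      ((hadapted i).mono (F.mono hi))
  have hMpos : ∀ n ω, 0 < M n ω := fun n ω => Real.exp_pos _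
  have hMint : ∀ n, Integrable (M n) μ := by
    intro n
    refine Integrable.mono' (integrable_const (Real.exp ((n:ℝ) * (1/2))))
      ((hMadp n).mono (F.le n)).aestronglyMeasurable ?_
    filter_upwards [hP01] with ω hω
    rw [Real.norm_eq_abs, abs_of_nonneg (hMpos n ω).le]
    apply Real.exp_le_exp.2
    calc ∑ i ∈ Finset.range n, ((1/2) * Pi (i+1) ω - X (i+1) ω)
        ≤ ∑ i ∈ Finset.range n, (1/2 : ℝ) := by
          refine Finset.sum_le_sum fun i _ => ?_
          have := (hω i).2; have := (hX01 i ω).1; linarith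
      _ = (n:ℝ) * (1/2) := by simp [Finset.sum_const, nsmul_eq_mul]
  have hsuper : Supermartingale M F μ := by
    refine supermartingale_nat hMadp hMint ?_
    intro n
    set f : Ω → ℝ := fun ω => M n ω * Real.exp ((1/2) * Pi (n+1) ω) with hf
    set g : Ω → ℝ := fun ω => Real.exp (-(X (n+1) ω)) with hg
    have hfg : M (n+1) = f * g := by
      funext ω
      have he : ∀ a b d : ℝ, Real.exp (a + (b - d)) =
          Real.exp a * Real.exp b * Real.exp (-d) := by
        intro a b d; rw [← Real.exp_add, ← Real.exp_add]; ring_nf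
      simp only [hM_def, hf, hg, _root_.Pi.mul_apply, Finset.sum_range_succ]
      exact he _ _ _
    have hg_eq : g = fun ω => 1 - c * X (n+1) ω := by
      funext ω; rcases hbern n ω with h | h <;> simp [hg, h, hc]
    have hf_meas : StronglyMeasurable[F n] f :=
      (hMadp n).mul
        (Real.continuous_exp.comp_stronglyMeasurable ((hPmeas n).const_mul _))
    have hg_int : Integrable g μ := by
      refine Integrable.mono' (integrable_const (1:ℝ))
        (Real.continuous_exp.comp_stronglyMeasurable
          (((hadapted n).mono (F.le _)).neg)).aestronglyMeasurable
        (Eventually.of_forall fun ω => ?_)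
      rw [Real.norm_eq_abs, abs_of_nonneg (Real.exp_nonneg _)]
      exact Real.exp_le_one_iff.2 (by linarith [(hX01 n ω).1])
    have hfg_int : Integrable (f * g) μ := by rw [← hfg]; exact hMint (n+1)
    have hpull : μ[M (n+1)|F n] =ᵐ[μ] f * μ[g|F n] := by
      rw [hfg]; exact condExp_mul_of_stronglyMeasurable_left hf_meas hfg_int hg_int
    have hcg : μ[g|F n] =ᵐ[μ] fun ω => 1 - c * Pi (n+1) ω := by
      rw [hg_eq]
      have h1 : (fun ω => 1 - c * X (n+1) ω) = (fun _ => (1:ℝ)) - c • (X (n+1)) := by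
        funext ω; simp [smul_eq_mul]
      rw [h1]
      have hs := condExp_sub (μ := μ) (m := F n) (integrable_const (1:ℝ))
        ((hXint n).smul c)
      have hsm := condExp_smul (μ := μ) (m := F n) c (X (n+1))
      have hcc : μ[(fun _ => (1:ℝ))|F n] = fun _ => (1:ℝ) := condExp_const (F.le n) 1
      rw [hcc] at hs
      filter_upwards [hs, hsm, hcond n] with ω e1 e2 e3
      rw [e1]
      simp only [_root_.Pi.sub_apply]
      rw [e2]
      simp only [_root_.Pi.smul_apply, smul_eq_mul]
      rw [e3]
    have hc2 : Real.exp (-1) ≤ 1/2 := by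
      have h9 := Real.exp_one_gt_d9
      have hmul : Real.exp (-1) * Real.exp 1 = 1 := by
        rw [← Real.exp_add]; norm_num
      nlinarith [Real.exp_pos 1, Real.exp_pos (-1 : ℝ)]
    filter_upwards [hpull, hcg, hP01] with ω h1 h2 h3
    have hp0 := (h3 n).1
    have hp1 := (h3 n).2
    set p : ℝ := Pi (n+1) ω
    have key : Real.exp ((1/2) * p) * (1 - c * p) ≤ 1 := by
      have h4 : 1 - c * p ≤ Real.exp (-(c * p)) := by
        have := Real.add_one_le_exp (-(c * p)); linarith
      have h5 : Real.exp ((1/2) * p) * (1 - c * p)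
          ≤ Real.exp ((1/2) * p) * Real.exp (-(c * p)) :=
        mul_le_mul_of_nonneg_left h4 (Real.exp_nonneg _)
      rw [← Real.exp_add] at h5
      refine h5.trans (Real.exp_le_one_iff.2 ?_)
      have heq : (1/2 : ℝ) * p + -(c * p) = p * (Real.exp (-1) - 1/2) := by rw [hc]; ring
      rw [heq]
      exact mul_nonpos_of_nonneg_of_nonpos hp0 (by linarith)
    calc (μ[M (n+1)|F n]) ω = f ω * (μ[g|F n]) ω := h1
      _ = M n ω * (Real.exp ((1/2) * p) * (1 - c * p)) := by rw [h2]; simp only [hf]; ring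
      _ ≤ M n ω * 1 := mul_le_mul_of_nonneg_left key (hMpos n ω).le
      _ = M n ω := mul_one _
  have hfinal := nonneg_supermartingale_anytime hsuper (fun n ω => (hMpos n ω).le)
    (Real.exp_pos W)
  have hM0 : ∫ ω, M 0 ω ∂μ = 1 := by simp [hM_def]
  rw [hM0, ENNReal.ofReal_one] at hfinal
  have hsub : {ω | ∃ n : ℕ, (∑ i ∈ Finset.range n, X (i + 1) ω) <
      (1 / 2) * (∑ i ∈ Finset.range n, Pi (i + 1) ω) - W}
      ⊆ {ω | ∃ n, Real.exp W ≤ M n ω} := by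
    rintro ω ⟨n, hn⟩
    refine ⟨n, Real.exp_le_exp.2 ?_⟩
    rw [Finset.mul_sum] at hn
    rw [Finset.sum_sub_distrib]
    linarith
  have hle : μ {ω | ∃ n : ℕ, (∑ i ∈ Finset.range n, X (i + 1) ω) <
      (1 / 2) * (∑ i ∈ Finset.range n, Pi (i + 1) ω) - W}
      ≤ μ {ω | ∃ n, Real.exp W ≤ M n ω} := measure_mono hsub
  refine hle.trans ?_
  have hinv : μ {ω | ∃ n, Real.exp W ≤ M n ω} ≤ (ENNReal.ofReal (Real.exp W))⁻¹ := by
    rw [ENNReal.le_inv_iff_mul_le, mul_comm]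
    exact hfinal
  refine hinv.trans_eq ?_
  rw [← ENNReal.ofReal_inv_of_pos (Real.exp_pos W), ← Real.exp_neg]
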